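/- Sufficiency direction of Lemma 2: Let {Π_m}_{m=1}^M be a POVM with rank-one operators on H. If there exist c_m ∈ [0,1] with Σ_m c_m Π_m = Z_0 = P(|0⟩⟨0|_A ⊗ I_B)P, then setting Φ_m^{(0)} = c_m T_0 Π_m T_0† and Φ_m^{(1)} = (1−c_m) T_1 Π_m T_1† defines POVMs on H_B^{(0)} and H_B^{(1)} respectively, satisfying Π_m = P(|0⟩⟨0|_A ⊗ Φ_m^{(0)} + |1⟩⟨1|_A ⊗ Φ_m^{(1)})P for all m. -/

import Mathlib

noncomputable section
open scoped InnerProductSpace ComplexConjugate ComplexOrder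

variable {E F : Type*} [NormedAddCommGroup E] [InnerProductSpace ℂ E]
  [NormedAddCommGroup F] [InnerProductSpace ℂ F]

/-- rank-one operator |x⟩⟨y| : E → F -/
def rankOne (x : F) (y : E) : E →ₗ[ℂ] F where
  toFun z := ⟪y, z⟫_ℂ • x
  map_add' a b := by simp [inner_add_right, add_smul]
  map_smul' c a := by simp [inner_smul_right, smul_smul]

/-- positive semidefinite operator (using the complex partial order) -/
def IsPSD {E : Type*} [NormedAddCommGroup E] [InnerProductSpace ℂ E]
    (T : E →ₗ[ℂ] E) : Prop := ∀ x : E, 0 ≤ ⟪x, T x⟫_ℂ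

/-- simple tensor v ⊗ b in ℂⁿ ⊗ H_B, modeled as `PiLp 2` -/
def tp {n : ℕ} {HB : Type*} [NormedAddCommGroup HB] [InnerProductSpace ℂ HB]
    (v : EuclideanSpace ℂ (Fin n)) (b : HB) : PiLp 2 (fun _ : Fin n => HB) :=
  (WithLp.equiv 2 _).symm fun i => v i • b

/-- operator tensor M ⊗ X on ℂⁿ ⊗ H_B, where M is a matrix on ℂⁿ -/
def opT {n : ℕ} {HB : Type*} [NormedAddCommGroup HB] [InnerProductSpace ℂ HB]
    (M : Matrix (Fin n) (Fin n) ℂ) (X : HB →ₗ[ℂ] HB) :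
    PiLp 2 (fun _ : Fin n => HB) →ₗ[ℂ] PiLp 2 (fun _ : Fin n => HB) where
  toFun f := (WithLp.equiv 2 _).symm fun i => ∑ j, M i j • X (f j)
  map_add' f g := by
    ext i
    simp only [WithLp.equiv_symm_apply, WithLp.ofLp_toLp, PiLp.add_apply, map_add, smul_add]
    exact Finset.sum_add_distrib
  map_smul' c f := by
    ext i
    simp only [WithLp.equiv_symm_apply, WithLp.ofLp_toLp, PiLp.smul_apply, map_smul, RingHom.id_apply,
      Finset.smul_sum]
    exact Finset.sum_congr rfl fun j _ => (smul_comm _ _ _)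

/-- outer product matrix |v⟩⟨v| -/
def outerM {n : ℕ} (v : EuclideanSpace ℂ (Fin n)) : Matrix (Fin n) (Fin n) ℂ :=
  fun i j => v i * conj (v j)

/-- orthogonal projection onto a subspace, as an operator -/
def projOp {E : Type*} [NormedAddCommGroup E] [InnerProductSpace ℂ E]
    [FiniteDimensional ℂ E] (K : Submodule ℂ E) : E →ₗ[ℂ] E :=
  (K.subtypeL.comp K.orthogonalProjectionOnto).toLinearMap

/- ########## auxiliary lemmas ########## -/

@[simp] lemma rankOne_apply (x : F) (y z : E) : rankOne x y z = ⟪y, z⟫_ℂ • x := rfl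

lemma adjoint_T [FiniteDimensional ℂ E] [FiniteDimensional ℂ F] (η ν : F) (p q : E) (a b : ℝ) :
    LinearMap.adjoint ((a:ℂ) • rankOne η p + (b:ℂ) • rankOne ν q) =
      (a:ℂ) • rankOne p η + (b:ℂ) • rankOne q ν := by
  symm
  rw [LinearMap.eq_adjoint_iff]
  intro x y
  simp only [LinearMap.add_apply, LinearMap.smul_apply, rankOne_apply, inner_add_left,
    inner_add_right, inner_smul_left, inner_smul_right, Complex.conj_ofReal, map_mul,
    inner_conj_symm]
  ring

lemma projOp_span_pair {F : Type*} [NormedAddCommGroup F] [InnerProductSpace ℂ F]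
    [FiniteDimensional ℂ F] (η ν : F) (h : ⟪η, ν⟫_ℂ = 0) (y : F) :
    projOp (Submodule.span ℂ {η, ν}) y =
      (((‖η‖^2)⁻¹ : ℝ) : ℂ) • (⟪η, y⟫_ℂ • η) + (((‖ν‖^2)⁻¹ : ℝ) : ℂ) • (⟪ν, y⟫_ℂ • ν) := by
  have hmem : (((‖η‖^2)⁻¹ : ℝ) : ℂ) • (⟪η, y⟫_ℂ • η) + (((‖ν‖^2)⁻¹ : ℝ) : ℂ) • (⟪ν, y⟫_ℂ • ν)
      ∈ Submodule.span ℂ {η, ν} := by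
    apply Submodule.add_mem <;> apply Submodule.smul_mem <;> apply Submodule.smul_mem <;>
      apply Submodule.subset_span <;> simp
  have key : ∀ w ∈ Submodule.span ℂ ({η, ν} : Set F),
      ⟪y - ((((‖η‖^2)⁻¹ : ℝ) : ℂ) • (⟪η, y⟫_ℂ • η) + (((‖ν‖^2)⁻¹ : ℝ) : ℂ) • (⟪ν, y⟫_ℂ • ν)), w⟫_ℂ = 0 := by
    intro w hw
    rw [inner_eq_zero_symm]
    induction hw using Submodule.span_induction with
    | mem w hw =>
      have hn : ∀ z : F, ⟪z, z⟫_ℂ = ((‖z‖^2 : ℝ) : ℂ) := fun z => by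
        rw [inner_self_eq_norm_sq_to_K]; norm_cast
      have hvu : ⟪ν, η⟫_ℂ = 0 := by rw [← inner_conj_symm, h]; simp
      rcases hw with rfl | hw
      · simp only [inner_sub_right, inner_add_right, inner_smul_right, hn, h, hvu]
        rcases eq_or_ne w 0 with rfl | hw0
        · simp
        · have h2 : ((‖w‖^2 : ℝ) : ℂ) ≠ 0 := by
            simpa using pow_ne_zero 2 (norm_ne_zero_iff.mpr hw0)
          push_cast at h2 ⊢; field_simp; simp
      · simp only [Set.mem_singleton_iff] at hw; subst hw
        simp only [inner_sub_right, inner_add_right, inner_smul_right, hn, h, hvu]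
        rcases eq_or_ne w 0 with rfl | hw0
        · simp
        · have h2 : ((‖w‖^2 : ℝ) : ℂ) ≠ 0 := by
            simpa using pow_ne_zero 2 (norm_ne_zero_iff.mpr hw0)
          push_cast at h2 ⊢; field_simp; simp
    | zero => simp
    | add _ _ _ _ h1 h2 => rw [inner_add_left, h1, h2, add_zero]
    | smul c _ _ h1 => rw [inner_smul_left, h1, mul_zero]
  have := Submodule.eq_starProjection_of_mem_of_inner_eq_zero hmem key
  exact this

section T
variable {n : ℕ} {HB : Type*} [NormedAddCommGroup HB] [InnerProductSpace ℂ HB]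

lemma inner_tp (v w : EuclideanSpace ℂ (Fin n)) (b c : HB) :
    ⟪tp v b, tp w c⟫_ℂ = ⟪v, w⟫_ℂ * ⟪b, c⟫_ℂ := by
  simp only [tp, PiLp.inner_apply, WithLp.equiv_symm_apply, PiLp.toLp_apply, inner_smul_left,
    inner_smul_right, EuclideanSpace.inner_eq_star_dotProduct]
  simp only [dotProduct, Finset.sum_mul]
  exact Finset.sum_congr rfl fun j _ => by simp [RCLike.inner_apply]; ring

lemma opT_outer_tp (X : HB →ₗ[ℂ] HB) (w v : EuclideanSpace ℂ (Fin n)) (b : HB) :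
    opT (outerM w) X (tp v b) = ⟪w, v⟫_ℂ • tp w (X b) := by
  ext i
  simp only [opT, outerM, tp, LinearMap.coe_mk, AddHom.coe_mk, WithLp.equiv_symm_apply, PiLp.toLp_apply,
    PiLp.smul_apply, map_smul, EuclideanSpace.inner_eq_star_dotProduct]
  rw [smul_smul, Finset.sum_congr rfl (fun j _ => by rw [smul_smul]), ← Finset.sum_smul]
  congr 1
  simp [dotProduct, Finset.mul_sum, Finset.sum_mul]
  apply Finset.sum_congr rfl
  intro j _
  ring

@[simp] lemma tp_add (v : EuclideanSpace ℂ (Fin n)) (b c : HB) :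
    tp v (b + c) = tp v b + tp v c := by
  ext i; simp [tp, smul_add]

@[simp] lemma tp_smul (v : EuclideanSpace ℂ (Fin n)) (a : ℂ) (b : HB) :
    tp v (a • b) = a • tp v b := by
  ext i; simp [tp, smul_smul, mul_comm]

@[simp] lemma tp_zero (v : EuclideanSpace ℂ (Fin n)) : tp v (0 : HB) = 0 := by
  ext i; simp [tp]
end T


set_option maxHeartbeats 2000000 in
/-- sufficiency direction of Lemma 2: if c_m ∈ [0,1] satisfy
Σ c_m Π_m = Z_0 = P(|0⟩⟨0|⊗I_B)P, then Φ_m⁰ = c_m T_0 Π_m T_0† and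
Φ_m¹ = (1-c_m) T_1 Π_m T_1† are POVMs on H_B⁽⁰⁾, H_B⁽¹⁾ realizing the Π_m. -/
theorem lemma2_sufficiency
    {HB : Type*} [NormedAddCommGroup HB] [InnerProductSpace ℂ HB] [FiniteDimensional ℂ HB]
    (M : ℕ)
    (e : Fin 2 → EuclideanSpace ℂ (Fin 2)) (he : Orthonormal ℂ e)
    (η ν : Fin 2 → HB) (pi pip : PiLp 2 (fun _ : Fin 2 => HB))
    (hON : Orthonormal ℂ ![pi, pip])
    (hpi : pi = tp (e 0) (η 0) + tp (e 1) (η 1))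
    (hpip : pip = tp (e 0) (ν 0) + tp (e 1) (ν 1))
    (horth : ∀ k : Fin 2, ⟪η k, ν k⟫_ℂ = 0)
    (Pv : Fin M → (PiLp 2 (fun _ : Fin 2 => HB) →ₗ[ℂ] PiLp 2 (fun _ : Fin 2 => HB)))
    (hrank : ∀ m, ∃ x, x ≠ 0 ∧ x ∈ Submodule.span ℂ {pi, pip} ∧ Pv m = rankOne x x)
    (hsum : ∑ m, Pv m = rankOne pi pi + rankOne pip pip)
    (c : Fin M → ℝ) (hc : ∀ m, 0 ≤ c m ∧ c m ≤ 1)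
    (hZ : ∑ m, (c m : ℂ) • Pv m =
      (rankOne pi pi + rankOne pip pip) ∘ₗ opT (outerM (e 0)) LinearMap.id ∘ₗ
        (rankOne pi pi + rankOne pip pip)) :
    -- with T_k = η_k⁻|η_k⟩⟨π| + ν_k⁻|ν_k⟩⟨π⊥| and the coefficients c_m⁽⁰⁾ = c_m,
    -- c_m⁽¹⁾ = 1 - c_m, the operators Φ_m⁽ᵏ⁾ = c_m⁽ᵏ⁾ T_k Π_m T_k† form POVMs on
    -- span(η_k, ν_k) and realize the Π_m
    (∀ k m, IsPSD
      ((if k = (0 : Fin 2) then ((c m : ℝ) : ℂ) else ((1 - c m : ℝ) : ℂ)) •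
        (((((‖η k‖ ^ 2)⁻¹ : ℝ) : ℂ) • rankOne (η k) pi +
            (((‖ν k‖ ^ 2)⁻¹ : ℝ) : ℂ) • rankOne (ν k) pip) ∘ₗ Pv m ∘ₗ
          LinearMap.adjoint ((((‖η k‖ ^ 2)⁻¹ : ℝ) : ℂ) • rankOne (η k) pi +
            (((‖ν k‖ ^ 2)⁻¹ : ℝ) : ℂ) • rankOne (ν k) pip)))) ∧
    (∀ k m, LinearMap.range
      ((if k = (0 : Fin 2) then ((c m : ℝ) : ℂ) else ((1 - c m : ℝ) : ℂ)) •
        (((((‖η k‖ ^ 2)⁻¹ : ℝ) : ℂ) • rankOne (η k) pi +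
            (((‖ν k‖ ^ 2)⁻¹ : ℝ) : ℂ) • rankOne (ν k) pip) ∘ₗ Pv m ∘ₗ
          LinearMap.adjoint ((((‖η k‖ ^ 2)⁻¹ : ℝ) : ℂ) • rankOne (η k) pi +
            (((‖ν k‖ ^ 2)⁻¹ : ℝ) : ℂ) • rankOne (ν k) pip))) ≤
        Submodule.span ℂ {η k, ν k}) ∧
    (∀ k : Fin 2, ∑ m,
      (if k = (0 : Fin 2) then ((c m : ℝ) : ℂ) else ((1 - c m : ℝ) : ℂ)) •
        (((((‖η k‖ ^ 2)⁻¹ : ℝ) : ℂ) • rankOne (η k) pi +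
            (((‖ν k‖ ^ 2)⁻¹ : ℝ) : ℂ) • rankOne (ν k) pip) ∘ₗ Pv m ∘ₗ
          LinearMap.adjoint ((((‖η k‖ ^ 2)⁻¹ : ℝ) : ℂ) • rankOne (η k) pi +
            (((‖ν k‖ ^ 2)⁻¹ : ℝ) : ℂ) • rankOne (ν k) pip)) =
        projOp (Submodule.span ℂ {η k, ν k})) ∧
    (∀ m, Pv m =
      (rankOne pi pi + rankOne pip pip) ∘ₗ
        (opT (outerM (e 0))
          (((c m : ℝ) : ℂ) •
            (((((‖η 0‖ ^ 2)⁻¹ : ℝ) : ℂ) • rankOne (η 0) pi +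
                (((‖ν 0‖ ^ 2)⁻¹ : ℝ) : ℂ) • rankOne (ν 0) pip) ∘ₗ Pv m ∘ₗ
              LinearMap.adjoint ((((‖η 0‖ ^ 2)⁻¹ : ℝ) : ℂ) • rankOne (η 0) pi +
                (((‖ν 0‖ ^ 2)⁻¹ : ℝ) : ℂ) • rankOne (ν 0) pip))) +
         opT (outerM (e 1))
          (((1 - c m : ℝ) : ℂ) •
            (((((‖η 1‖ ^ 2)⁻¹ : ℝ) : ℂ) • rankOne (η 1) pi +
                (((‖ν 1‖ ^ 2)⁻¹ : ℝ) : ℂ) • rankOne (ν 1) pip) ∘ₗ Pv m ∘ₗ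
              LinearMap.adjoint ((((‖η 1‖ ^ 2)⁻¹ : ℝ) : ℂ) • rankOne (η 1) pi +
                (((‖ν 1‖ ^ 2)⁻¹ : ℝ) : ℂ) • rankOne (ν 1) pip)))) ∘ₗ
        (rankOne pi pi + rankOne pip pip)) := by
  classical
  choose x hx0 hxsp hPv using hrank
  -- inner product dictionary
  have hON' := orthonormal_iff_ite.mp hON
  have hpp : ⟪pi, pi⟫_ℂ = 1 := by simpa using hON' 0 0
  have hppip : ⟪pi, pip⟫_ℂ = 0 := by simpa using hON' 0 1
  have hpipp : ⟪pip, pi⟫_ℂ = 0 := by simpa using hON' 1 0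
  have hpipip : ⟪pip, pip⟫_ℂ = 1 := by simpa using hON' 1 1
  have he' := orthonormal_iff_ite.mp he
  have he00 : ⟪e 0, e 0⟫_ℂ = 1 := by simpa using he' 0 0
  have he01 : ⟪e 0, e 1⟫_ℂ = 0 := by simpa using he' 0 1
  have he10 : ⟪e 1, e 0⟫_ℂ = 0 := by simpa using he' 1 0
  have he11 : ⟪e 1, e 1⟫_ℂ = 1 := by simpa using he' 1 1
  have hitp : ∀ u0 u1 v0 v1 : HB,
      ⟪tp (e 0) u0 + tp (e 1) u1, tp (e 0) v0 + tp (e 1) v1⟫_ℂ = ⟪u0, v0⟫_ℂ + ⟪u1, v1⟫_ℂ := by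
    intro u0 u1 v0 v1
    simp only [inner_add_left, inner_add_right, inner_tp, he00, he01, he10, he11]
    ring
  have hnn : ∀ z : HB, ⟪z, z⟫_ℂ = ((‖z‖^2 : ℝ) : ℂ) := fun z => by
    rw [inner_self_eq_norm_sq_to_K]; norm_cast
  have horth' : ∀ k, ⟪ν k, η k⟫_ℂ = 0 := fun k => by
    rw [← inner_conj_symm, horth k]; simp
  have hnη : ((‖η 0‖^2 : ℝ) : ℂ) + ((‖η 1‖^2 : ℝ) : ℂ) = 1 := by
    rw [← hnn, ← hnn, ← hitp (η 0) (η 1) (η 0) (η 1), ← hpi, hpp]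
  have hnν : ((‖ν 0‖^2 : ℝ) : ℂ) + ((‖ν 1‖^2 : ℝ) : ℂ) = 1 := by
    rw [← hnn, ← hnn, ← hitp (ν 0) (ν 1) (ν 0) (ν 1), ← hpip, hpipip]
  -- ## chunk 2
  have hQapp : ∀ y, (rankOne pi pi + rankOne pip pip) y = ⟪pi,y⟫_ℂ • pi + ⟪pip,y⟫_ℂ • pip := by
    intro y; simp
  have hopT0 : ∀ (X : HB →ₗ[ℂ] HB) (b0 b1 : HB),
      opT (outerM (e 0)) X (tp (e 0) b0 + tp (e 1) b1) = tp (e 0) (X b0) := by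
    intro X b0 b1
    rw [map_add, opT_outer_tp, opT_outer_tp, he00, he01]; simp
  have hopT1 : ∀ (X : HB →ₗ[ℂ] HB) (b0 b1 : HB),
      opT (outerM (e 1)) X (tp (e 0) b0 + tp (e 1) b1) = tp (e 1) (X b1) := by
    intro X b0 b1
    rw [map_add, opT_outer_tp, opT_outer_tp, he10, he11]; simp
  have hinpi : ∀ b0 b1 : HB, ⟪pi, tp (e 0) b0 + tp (e 1) b1⟫_ℂ = ⟪η 0, b0⟫_ℂ + ⟪η 1, b1⟫_ℂ := by
    intro b0 b1; rw [hpi, hitp]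
  have hinpip : ∀ b0 b1 : HB, ⟪pip, tp (e 0) b0 + tp (e 1) b1⟫_ℂ = ⟪ν 0, b0⟫_ℂ + ⟪ν 1, b1⟫_ℂ := by
    intro b0 b1; rw [hpip, hitp]
  have hQtp : ∀ b0 b1 : HB, (rankOne pi pi + rankOne pip pip) (tp (e 0) b0 + tp (e 1) b1) =
      (⟪η 0, b0⟫_ℂ + ⟪η 1, b1⟫_ℂ) • pi + (⟪ν 0, b0⟫_ℂ + ⟪ν 1, b1⟫_ℂ) • pip := by
    intro b0 b1; rw [hQapp, hinpi, hinpip]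
  have hZ0 : ∑ m, (c m : ℂ) • Pv m =
      ((‖η 0‖^2 : ℝ):ℂ) • rankOne pi pi + ((‖ν 0‖^2 : ℝ):ℂ) • rankOne pip pip := by
    rw [hZ]
    have hM0pi : opT (outerM (e 0)) LinearMap.id pi = tp (e 0) (η 0) := by
      conv_lhs => rw [hpi]
      rw [hopT0]; rfl
    have hM0pip : opT (outerM (e 0)) LinearMap.id pip = tp (e 0) (ν 0) := by
      conv_lhs => rw [hpip]
      rw [hopT0]; rfl
    have q0 : ∀ b0 : HB, (rankOne pi pi + rankOne pip pip) (tp (e 0) b0) =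
        ⟪η 0, b0⟫_ℂ • pi + ⟪ν 0, b0⟫_ℂ • pip := by
      intro b0; have := hQtp b0 0; simpa using this
    refine LinearMap.ext fun y => ?_
    rw [LinearMap.comp_apply, LinearMap.comp_apply, hQapp y, map_add, map_smul, map_smul,
      hM0pi, hM0pip, map_add, map_smul, map_smul, q0, q0, hnn, hnn, horth 0, horth' 0]
    simp only [LinearMap.add_apply, LinearMap.smul_apply, rankOne_apply, zero_smul,
      add_zero, zero_add, smul_add, smul_smul]
    module
  have hZ1 : ∑ m, ((1 - c m : ℝ):ℂ) • Pv m =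
      ((‖η 1‖^2 : ℝ):ℂ) • rankOne pi pi + ((‖ν 1‖^2 : ℝ):ℂ) • rankOne pip pip := by
    have hstep : ∀ m : Fin M, ((1 - c m : ℝ):ℂ) • Pv m = Pv m - (c m:ℂ) • Pv m := by
      intro m; push_cast; rw [sub_smul, one_smul]
    rw [Finset.sum_congr rfl (fun m _ => hstep m), Finset.sum_sub_distrib, hsum, hZ0]
    have e1 : ((‖η 1‖^2:ℝ):ℂ) = 1 - ((‖η 0‖^2:ℝ):ℂ) := by linear_combination hnη
    have e2 : ((‖ν 1‖^2:ℝ):ℂ) = 1 - ((‖ν 0‖^2:ℝ):ℂ) := by linear_combination hnν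
    rw [e1, e2]
    module
  have keyfact : ∀ (d : Fin M → ℝ), (∀ m', 0 ≤ d m') →
      ∀ v, ⟪v, (∑ m', ((d m' : ℝ):ℂ) • Pv m') v⟫_ℂ = 0 →
      ∀ m', d m' = 0 ∨ ⟪v, x m'⟫_ℂ = 0 := by
    intro d hd v hv m'
    have hexp : ∀ m'', ⟪v, (((d m'' : ℝ):ℂ) • Pv m'') v⟫_ℂ =
        ((d m'' * Complex.normSq ⟪v, x m''⟫_ℂ : ℝ):ℂ) := by
      intro m''
      rw [hPv m'']
      simp only [LinearMap.smul_apply, rankOne_apply, inner_smul_right]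
      rw [Complex.ofReal_mul, ← Complex.mul_conj, ← inner_conj_symm (x m'') v]
      ring
    rw [LinearMap.sum_apply, inner_sum] at hv
    rw [Finset.sum_congr rfl (fun m'' _ => hexp m'')] at hv
    rw [← Complex.ofReal_sum] at hv
    have hv' : ∑ m'', d m'' * Complex.normSq ⟪v, x m''⟫_ℂ = 0 := by exact_mod_cast hv
    have := (Finset.sum_eq_zero_iff_of_nonneg
      (fun i _ => mul_nonneg (hd i) (Complex.normSq_nonneg _))).mp hv' m' (Finset.mem_univ m')
    rcases mul_eq_zero.mp this with h | h
    · exact Or.inl h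
    · exact Or.inr (by simpa using Complex.normSq_eq_zero.mp h)
  have K1 : η 0 = 0 → ∀ m', c m' = 0 ∨ ⟪pi, x m'⟫_ℂ = 0 := by
    intro h0
    apply keyfact c (fun m' => (hc m').1) pi
    rw [hZ0]
    simp [inner_smul_right, hpp, hpipp, h0]
  have K2 : ν 0 = 0 → ∀ m', c m' = 0 ∨ ⟪pip, x m'⟫_ℂ = 0 := by
    intro h0
    apply keyfact c (fun m' => (hc m').1) pip
    rw [hZ0]
    simp [inner_smul_right, hppip, hpipip, h0]
  have K3 : η 1 = 0 → ∀ m', 1 - c m' = 0 ∨ ⟪pi, x m'⟫_ℂ = 0 := by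
    intro h0
    apply keyfact (fun m' => 1 - c m') (fun m' => by simpa using (hc m').2) pi
    rw [hZ1]
    simp [inner_smul_right, hpp, hpipp, h0]
  have K4 : ν 1 = 0 → ∀ m', 1 - c m' = 0 ∨ ⟪pip, x m'⟫_ℂ = 0 := by
    intro h0
    apply keyfact (fun m' => 1 - c m') (fun m' => by simpa using (hc m').2) pip
    rw [hZ1]
    simp [inner_smul_right, hppip, hpipip, h0]
  have hPSDPv : ∀ m w, 0 ≤ ⟪w, Pv m w⟫_ℂ := by
    intro m w
    rw [hPv m]
    simp only [rankOne_apply, inner_smul_right]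
    rw [← inner_conj_symm (x m) w, ← Complex.normSq_eq_conj_mul_self]
    exact_mod_cast Complex.normSq_nonneg _
  have hcoef : ∀ (k : Fin 2) m, ∃ r : ℝ, 0 ≤ r ∧
      (if k = (0 : Fin 2) then ((c m : ℝ) : ℂ) else ((1 - c m : ℝ) : ℂ)) = (r : ℂ) := by
    intro k m
    by_cases hk : k = 0
    · exact ⟨c m, (hc m).1, by simp [hk]⟩
    · exact ⟨1 - c m, by simpa using (hc m).2, by simp [hk]⟩
  refine ⟨?_, ?_, ?_, ?_⟩
  · -- PSD
    intro k m w
    obtain ⟨r, hr, hre⟩ := hcoef k m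
    rw [hre]
    simp only [LinearMap.smul_apply, LinearMap.comp_apply, inner_smul_right]
    rw [← LinearMap.adjoint_inner_left]
    calc (0:ℂ) = (r:ℂ) * 0 := by ring
    _ ≤ (r:ℂ) * ⟪(LinearMap.adjoint ((((‖η k‖ ^ 2)⁻¹ : ℝ) : ℂ) • rankOne (η k) pi +
            (((‖ν k‖ ^ 2)⁻¹ : ℝ) : ℂ) • rankOne (ν k) pip)) w, Pv m
          ((LinearMap.adjoint ((((‖η k‖ ^ 2)⁻¹ : ℝ) : ℂ) • rankOne (η k) pi +
            (((‖ν k‖ ^ 2)⁻¹ : ℝ) : ℂ) • rankOne (ν k) pip)) w)⟫_ℂ := by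
        apply mul_le_mul_of_nonneg_left (hPSDPv m _)
        exact_mod_cast hr
  · -- range
    intro k m
    rintro z ⟨w, rfl⟩
    simp only [LinearMap.smul_apply, LinearMap.comp_apply, LinearMap.add_apply, rankOne_apply]
    apply Submodule.smul_mem
    apply Submodule.add_mem
    · apply Submodule.smul_mem
      apply Submodule.smul_mem
      exact Submodule.subset_span (by simp)
    · apply Submodule.smul_mem
      apply Submodule.smul_mem
      exact Submodule.subset_span (by simp)
  · -- sum to projection
    intro k
    simp only [adjoint_T]
    have hcoefeq : ∀ m, (if k = (0:Fin 2) then ((c m : ℝ):ℂ) else ((1 - c m : ℝ):ℂ)) =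
        (((if k = (0:Fin 2) then c m else 1 - c m : ℝ)):ℂ) := by
      intro m; split_ifs <;> rfl
    simp only [hcoefeq]
    have hcomp : ∀ (d : Fin M → ℂ) (T : (PiLp 2 fun _ : Fin 2 => HB) →ₗ[ℂ] HB)
        (S : HB →ₗ[ℂ] (PiLp 2 fun _ : Fin 2 => HB)),
        ∑ m, d m • (T ∘ₗ Pv m ∘ₗ S) = T ∘ₗ (∑ m, d m • Pv m) ∘ₗ S := by
      intro d T S
      refine LinearMap.ext fun w => ?_
      simp [LinearMap.sum_apply, LinearMap.comp_apply, LinearMap.smul_apply, map_sum, map_smul]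
    rw [hcomp]
    have hmidk : ∑ m, (((if k = (0:Fin 2) then c m else 1 - c m : ℝ)):ℂ) • Pv m =
        ((‖η k‖^2 : ℝ):ℂ) • rankOne pi pi + ((‖ν k‖^2 : ℝ):ℂ) • rankOne pip pip := by
      by_cases hk : k = 0
      · subst hk; simpa using hZ0
      · have hk1 : k = 1 := by omega
        subst hk1; simpa using hZ1
    rw [hmidk]
    refine LinearMap.ext fun w => ?_
    rw [projOp_span_pair (η k) (ν k) (horth k)]
    simp only [LinearMap.comp_apply, LinearMap.add_apply, LinearMap.smul_apply, rankOne_apply,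
      inner_add_right, inner_smul_right, hpp, hppip, hpipp, hpipip, mul_one, mul_zero,
      add_zero, zero_add, zero_smul, smul_smul, smul_add, smul_zero]
    have key : ∀ (r : ℝ) (z : ℂ), ((r⁻¹ : ℝ):ℂ) * (((r : ℝ):ℂ) * (((r⁻¹ : ℝ):ℂ) * z)) =
        ((r⁻¹ : ℝ):ℂ) * z := by
      intro r z
      rcases eq_or_ne r 0 with rfl | h
      · simp
      · have : ((r:ℝ):ℂ) ≠ 0 := Complex.ofReal_ne_zero.mpr h
        push_cast
        field_simp
    rw [key, key]
  · -- realization of Pv m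
    intro m
    obtain ⟨α, β, hxab⟩ := Submodule.mem_span_pair.mp (hxsp m)
    have hα : ⟪pi, x m⟫_ℂ = α := by
      rw [← hxab]; simp only [inner_add_right, inner_smul_right, hpp, hppip]; ring
    have hβ : ⟪pip, x m⟫_ℂ = β := by
      rw [← hxab]; simp only [inner_add_right, inner_smul_right, hpipp, hpipip]; ring
    have habs : ∀ (u : HB) (γ : ℂ) (d : ℝ), (u = 0 → d = 0 ∨ γ = 0) →
        (d : ℂ) * ((((‖u‖^2)⁻¹ : ℝ):ℂ) * ((‖u‖^2 : ℝ):ℂ)) * γ = (d : ℂ) * γ := by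
      intro u γ d hcase
      rcases eq_or_ne u 0 with rfl | hu
      · rcases hcase rfl with h | h
        · simp [h]
        · simp [h]
      · have hne : (‖u‖^2 : ℝ) ≠ 0 := by simpa using pow_ne_zero 2 (norm_ne_zero_iff.mpr hu)
        rw [show (((‖u‖^2)⁻¹ : ℝ):ℂ) * ((‖u‖^2 : ℝ):ℂ) = 1 by
          rw [← Complex.ofReal_mul, inv_mul_cancel₀ hne, Complex.ofReal_one]]
        ring
    have A1 : (c m : ℂ) * ((((‖η 0‖^2)⁻¹ : ℝ):ℂ) * ((‖η 0‖^2 : ℝ):ℂ)) * α = (c m : ℂ) * α :=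
      habs (η 0) α (c m) (fun h => (K1 h m).imp_right (fun hz => by rw [← hα, hz]))
    have A1c : (c m : ℂ) * ((((‖η 0‖^2)⁻¹ : ℝ):ℂ) * ((‖η 0‖^2 : ℝ):ℂ)) * (conj α) = (c m : ℂ) * (conj α) :=
      habs (η 0) (conj α) (c m) (fun h => (K1 h m).imp_right (fun hz => by rw [← hα, hz, map_zero]))
    have A2 : (c m : ℂ) * ((((‖ν 0‖^2)⁻¹ : ℝ):ℂ) * ((‖ν 0‖^2 : ℝ):ℂ)) * β = (c m : ℂ) * β :=
      habs (ν 0) β (c m) (fun h => (K2 h m).imp_right (fun hz => by rw [← hβ, hz]))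
    have A2c : (c m : ℂ) * ((((‖ν 0‖^2)⁻¹ : ℝ):ℂ) * ((‖ν 0‖^2 : ℝ):ℂ)) * (conj β) = (c m : ℂ) * (conj β) :=
      habs (ν 0) (conj β) (c m) (fun h => (K2 h m).imp_right (fun hz => by rw [← hβ, hz, map_zero]))
    have B1 : ((1 - c m : ℝ) : ℂ) * ((((‖η 1‖^2)⁻¹ : ℝ):ℂ) * ((‖η 1‖^2 : ℝ):ℂ)) * α = ((1 - c m : ℝ) : ℂ) * α :=
      habs (η 1) α (1 - c m) (fun h => (K3 h m).imp_right (fun hz => by rw [← hα, hz]))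
    have B1c : ((1 - c m : ℝ) : ℂ) * ((((‖η 1‖^2)⁻¹ : ℝ):ℂ) * ((‖η 1‖^2 : ℝ):ℂ)) * (conj α) = ((1 - c m : ℝ) : ℂ) * (conj α) :=
      habs (η 1) (conj α) (1 - c m) (fun h => (K3 h m).imp_right (fun hz => by rw [← hα, hz, map_zero]))
    have B2 : ((1 - c m : ℝ) : ℂ) * ((((‖ν 1‖^2)⁻¹ : ℝ):ℂ) * ((‖ν 1‖^2 : ℝ):ℂ)) * β = ((1 - c m : ℝ) : ℂ) * β :=
      habs (ν 1) β (1 - c m) (fun h => (K4 h m).imp_right (fun hz => by rw [← hβ, hz]))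
    have B2c : ((1 - c m : ℝ) : ℂ) * ((((‖ν 1‖^2)⁻¹ : ℝ):ℂ) * ((‖ν 1‖^2 : ℝ):ℂ)) * (conj β) = ((1 - c m : ℝ) : ℂ) * (conj β) :=
      habs (ν 1) (conj β) (1 - c m) (fun h => (K4 h m).imp_right (fun hz => by rw [← hβ, hz, map_zero]))
    have habs2 : ∀ (u v : HB) (γ δ : ℂ) (d : ℝ), (u = 0 → d = 0 ∨ γ = 0) →
        (v = 0 → d = 0 ∨ δ = 0) →
        (d : ℂ) * (((((‖u‖^2)⁻¹ : ℝ):ℂ) * ((‖u‖^2 : ℝ):ℂ)) * ((((‖v‖^2)⁻¹ : ℝ):ℂ) * ((‖v‖^2 : ℝ):ℂ))) * (γ * δ) =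
          (d : ℂ) * (γ * δ) := by
      intro u v γ δ d hu hv
      rcases eq_or_ne u 0 with rfl | hu0
      · rcases hu rfl with h | h
        · simp [h]
        · simp [h]
      · have hne : (‖u‖^2 : ℝ) ≠ 0 := by simpa using pow_ne_zero 2 (norm_ne_zero_iff.mpr hu0)
        rw [show (((‖u‖^2)⁻¹ : ℝ):ℂ) * ((‖u‖^2 : ℝ):ℂ) = 1 by
          rw [← Complex.ofReal_mul, inv_mul_cancel₀ hne, Complex.ofReal_one]]
        rcases eq_or_ne v 0 with rfl | hv0
        · rcases hv rfl with h | h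
          · simp [h]
          · simp [h]
        · have hne' : (‖v‖^2 : ℝ) ≠ 0 := by simpa using pow_ne_zero 2 (norm_ne_zero_iff.mpr hv0)
          rw [show (((‖v‖^2)⁻¹ : ℝ):ℂ) * ((‖v‖^2 : ℝ):ℂ) = 1 by
            rw [← Complex.ofReal_mul, inv_mul_cancel₀ hne', Complex.ofReal_one]]
          ring
    have F5 : (c m : ℂ) * (((((‖η 0‖^2)⁻¹ : ℝ):ℂ) * ((‖η 0‖^2 : ℝ):ℂ)) * ((((‖ν 0‖^2)⁻¹ : ℝ):ℂ) * ((‖ν 0‖^2 : ℝ):ℂ))) * ((conj α) * β) = (c m : ℂ) * ((conj α) * β) :=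
      habs2 (η 0) (ν 0) (conj α) β (c m)
        (fun h => (K1 h m).imp_right (fun hz => by rw [← hα, hz, map_zero]))
        (fun h => (K2 h m).imp_right (fun hz => by rw [← hβ, hz]))
    have F5c : (c m : ℂ) * (((((‖η 0‖^2)⁻¹ : ℝ):ℂ) * ((‖η 0‖^2 : ℝ):ℂ)) * ((((‖ν 0‖^2)⁻¹ : ℝ):ℂ) * ((‖ν 0‖^2 : ℝ):ℂ))) * (α * (conj β)) = (c m : ℂ) * (α * (conj β)) :=
      habs2 (η 0) (ν 0) α (conj β) (c m)
        (fun h => (K1 h m).imp_right (fun hz => by rw [← hα, hz]))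
        (fun h => (K2 h m).imp_right (fun hz => by rw [← hβ, hz, map_zero]))
    have F6 : ((1 - c m : ℝ) : ℂ) * (((((‖η 1‖^2)⁻¹ : ℝ):ℂ) * ((‖η 1‖^2 : ℝ):ℂ)) * ((((‖ν 1‖^2)⁻¹ : ℝ):ℂ) * ((‖ν 1‖^2 : ℝ):ℂ))) * ((conj α) * β) = ((1 - c m : ℝ) : ℂ) * ((conj α) * β) :=
      habs2 (η 1) (ν 1) (conj α) β (1 - c m)
        (fun h => (K3 h m).imp_right (fun hz => by rw [← hα, hz, map_zero]))
        (fun h => (K4 h m).imp_right (fun hz => by rw [← hβ, hz]))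
    have F6c : ((1 - c m : ℝ) : ℂ) * (((((‖η 1‖^2)⁻¹ : ℝ):ℂ) * ((‖η 1‖^2 : ℝ):ℂ)) * ((((‖ν 1‖^2)⁻¹ : ℝ):ℂ) * ((‖ν 1‖^2 : ℝ):ℂ))) * (α * (conj β)) = ((1 - c m : ℝ) : ℂ) * (α * (conj β)) :=
      habs2 (η 1) (ν 1) α (conj β) (1 - c m)
        (fun h => (K3 h m).imp_right (fun hz => by rw [← hα, hz]))
        (fun h => (K4 h m).imp_right (fun hz => by rw [← hβ, hz, map_zero]))
    have hAgen : ∀ (Φ0 Φ1 : HB →ₗ[ℂ] HB),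
        (opT (outerM (e 0)) Φ0 + opT (outerM (e 1)) Φ1) pi =
          tp (e 0) (Φ0 (η 0)) + tp (e 1) (Φ1 (η 1)) := by
      intro Φ0 Φ1
      rw [LinearMap.add_apply]
      conv_lhs => rw [hpi]
      rw [hopT0, hopT1]
    have hAgen' : ∀ (Φ0 Φ1 : HB →ₗ[ℂ] HB),
        (opT (outerM (e 0)) Φ0 + opT (outerM (e 1)) Φ1) pip =
          tp (e 0) (Φ0 (ν 0)) + tp (e 1) (Φ1 (ν 1)) := by
      intro Φ0 Φ1
      rw [LinearMap.add_apply]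
      conv_lhs => rw [hpip]
      rw [hopT0, hopT1]
    refine LinearMap.ext fun y => ?_
    simp only [adjoint_T, hPv m]
    rw [← hxab]
    rw [LinearMap.comp_apply, LinearMap.comp_apply, hQapp y, map_add, map_smul, map_smul,
      hAgen, hAgen', map_add, map_smul, map_smul, hQtp, hQtp]
    simp only [LinearMap.smul_apply, LinearMap.comp_apply, LinearMap.add_apply, rankOne_apply,
      inner_add_right, inner_smul_right, inner_add_left, inner_smul_left,
      hpp, hppip, hpipp, hpipip, horth 0, horth 1, horth' 0, horth' 1, hnn,
      mul_zero, mul_one, zero_mul, one_mul, zero_add, add_zero, zero_smul, smul_zero,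
      smul_smul, smul_add, map_add, map_smul, map_zero]
    push_cast at A1 A1c A2 A2c B1 B1c B2 B2c F5 F5c F6 F6c
    push_cast
    match_scalars
    · linear_combination (-⟪pi, y⟫_ℂ*α*(1+((↑‖η 0‖:ℂ)^2)⁻¹ * (↑‖η 0‖:ℂ)^2))*A1c +
        (-⟪pi, y⟫_ℂ*α*(1+((↑‖η 1‖:ℂ)^2)⁻¹ * (↑‖η 1‖:ℂ)^2))*B1c +
        (-⟪pip, y⟫_ℂ)*F5c + (-⟪pip, y⟫_ℂ)*F6c
    · linear_combination (-⟪pi, y⟫_ℂ)*F5 + (-⟪pi, y⟫_ℂ)*F6 +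
        (-⟪pip, y⟫_ℂ*β*(1+((↑‖ν 0‖:ℂ)^2)⁻¹ * (↑‖ν 0‖:ℂ)^2))*A2c +
        (-⟪pip, y⟫_ℂ*β*(1+((↑‖ν 1‖:ℂ)^2)⁻¹ * (↑‖ν 1‖:ℂ)^2))*B2c
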